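/- Let ℓ ≥ 1 and let n satisfy 3^ℓ ≤ n ≤ 2·3^ℓ. For any I ⊆ {1,2,3}^ℓ with card I = n − 3^ℓ, set α_n(I) = { S_σ(1/2) : σ ∈ {1,2,3}^ℓ \ I } ∪ ⋃_{σ ∈ I} S_σ(α₂). Then the distortion error of α_n(I) is V(P; α_n(I)) = 75^{−ℓ} ( (2·3^ℓ − n)·(1/9) + (n − 3^ℓ)·(821/28125) ). -/

import Mathlib

open MeasureTheory Filter
open scoped ENNReal

noncomputable section

/-- The three contractive similarities `S j x = x/5 + 2 j/5` (indexing `j = 0,1,2`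
corresponds to the paper's `j = 1,2,3`). -/
def S (j : Fin 3) : ℝ → ℝ := fun x => x / 5 + 2 * (j : ℝ) / 5

/-- For a word `σ ∈ {1,2,3}^k`, the composition `S_σ = S_{σ 0} ∘ ⋯ ∘ S_{σ (k-1)}`. -/
def Sword {k : ℕ} (σ : Fin k → Fin 3) : ℝ → ℝ :=
  (List.ofFn fun i => S (σ i)).foldr (· ∘ ·) id

/-- The basic interval `J j = S j ([0,1])`. -/
def J (j : Fin 3) : Set ℝ := S j '' Set.Icc 0 1

/-- The interval `J_σ = S_σ([0,1])`. -/
def Jword {k : ℕ} (σ : Fin k → Fin 3) : Set ℝ := Sword σ '' Set.Icc 0 1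

/-- The distortion error `V(P; α) = ∫ min_{a ∈ α} (x - a)^2 dP(x)`. -/
def distortion (P : Measure ℝ) (α : Set ℝ) : ℝ :=
  ∫ x, (⨅ a : α, (x - (a : ℝ)) ^ 2) ∂P

/-- The `n`-th quantization error
`V_n = inf { V(P; α) : α ⊂ ℝ finite, 1 ≤ card α ≤ n }`. -/
def quantErr (P : Measure ℝ) (n : ℕ) : ℝ :=
  sInf {e | ∃ α : Set ℝ, α.Finite ∧ α.Nonempty ∧ α.ncard ≤ n ∧ distortion P α = e}

/-- The self-similarity equation `P = (1/3)(P∘S₁⁻¹ + P∘S₂⁻¹ + P∘S₃⁻¹)`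
characterizing the standard triadic Cantor distribution. -/
def IsTriadicCantor (P : Measure ℝ) : Prop :=
  P = (3 : ℝ≥0∞)⁻¹ • (P.map (S 0) + P.map (S 1) + P.map (S 2))

lemma measurable_S (j : Fin 3) : Measurable (S j) := by
  unfold S; fun_prop

lemma S0_eq (y : ℝ) : S 0 y = y/5 := by norm_num [S]
lemma S1_eq (y : ℝ) : S 1 y = y/5 + 2/5 := by norm_num [S]
lemma S2_eq (y : ℝ) : S 2 y = y/5 + 4/5 := by norm_num [S]

lemma S_mem_Icc {j : Fin 3} {x : ℝ} (hx : x ∈ Set.Icc (0:ℝ) 1) : S j x ∈ Set.Icc (0:ℝ) 1 := by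
  have hj : (j:ℝ) ≤ 2 := by
    have := j.is_lt; exact_mod_cast Nat.lt_succ_iff.1 this
  have hj0 : (0:ℝ) ≤ (j:ℝ) := by positivity
  obtain ⟨h0, h1⟩ := hx
  constructor <;> simp only [S] <;> nlinarith

section Meas
variable (P : Measure ℝ) [IsProbabilityMeasure P]

lemma Papply (hP : IsTriadicCantor P) {A : Set ℝ} (hA : MeasurableSet A) :
    P A = 3⁻¹ * (P (S 0 ⁻¹' A) + P (S 1 ⁻¹' A) + P (S 2 ⁻¹' A)) := by
  conv_lhs => rw [hP]
  simp only [Measure.smul_apply, Measure.add_apply, smul_eq_mul,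
    Measure.map_apply (measurable_S _) hA]

lemma null_outside (hP : IsTriadicCantor P) : P (Set.Icc (0:ℝ) 1)ᶜ = 0 := by
  -- step inequality
  have key : ∀ t : ℝ, 0 ≤ t →
      P (Set.Icc (-t) (1+t))ᶜ ≤ P (Set.Icc (-(5*t)) (1+5*t))ᶜ := by
    intro t ht
    have hA : MeasurableSet (Set.Icc (-t) (1+t))ᶜ := (measurableSet_Icc).compl
    rw [Papply P hP hA]
    have hsub : ∀ j : Fin 3, S j ⁻¹' (Set.Icc (-t) (1+t))ᶜ ⊆ (Set.Icc (-(5*t)) (1+5*t))ᶜ := by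
      intro j x hx hx2
      apply hx
      obtain ⟨h0, h1⟩ := hx2
      have hj : (j:ℝ) ≤ 2 := by
        have := j.is_lt; exact_mod_cast Nat.lt_succ_iff.1 this
      have hj0 : (0:ℝ) ≤ (j:ℝ) := by positivity
      constructor <;> simp only [S] <;> nlinarith
    calc 3⁻¹ * (P (S 0 ⁻¹' (Set.Icc (-t) (1+t))ᶜ) + P (S 1 ⁻¹' (Set.Icc (-t) (1+t))ᶜ)
          + P (S 2 ⁻¹' (Set.Icc (-t) (1+t))ᶜ))
        ≤ 3⁻¹ * (P (Set.Icc (-(5*t)) (1+5*t))ᶜ + P (Set.Icc (-(5*t)) (1+5*t))ᶜ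
          + P (Set.Icc (-(5*t)) (1+5*t))ᶜ) := by
          gcongr 3⁻¹ * (?_ + ?_ + ?_) <;> exact measure_mono (hsub _)
      _ = P (Set.Icc (-(5*t)) (1+5*t))ᶜ := by
          rw [show ∀ a : ℝ≥0∞, a + a + a = 3 * a by intro a; ring]
          rw [← mul_assoc, ENNReal.inv_mul_cancel (by norm_num) (by norm_num), one_mul]
  have iter : ∀ (t : ℝ), 0 ≤ t → ∀ n : ℕ,
      P (Set.Icc (-t) (1+t))ᶜ ≤ P (Set.Icc (-(5^n*t)) (1+5^n*t))ᶜ := by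
    intro t ht n
    induction n with
    | zero => simp
    | succ n ih =>
      refine ih.trans ?_
      have := key (5^n*t) (by positivity)
      have e : (5:ℝ)^(n+1)*t = 5*(5^n*t) := by ring
      rw [e]; exact this
  have hzero : ∀ t : ℝ, 0 < t → P (Set.Icc (-t) (1+t))ᶜ = 0 := by
    intro t ht
    set s : ℕ → Set ℝ := fun n => (Set.Icc (-(5^n*t)) (1+5^n*t))ᶜ with hs
    have htend : Tendsto (fun n => P (s n)) atTop (nhds (P (⋂ n, s n))) :=
      tendsto_measure_iInter_atTop (fun n => (measurableSet_Icc).compl.nullMeasurableSet)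
        (by
          intro m n hmn
          apply Set.compl_subset_compl.2
          apply Set.Icc_subset_Icc
          · have : (5:ℝ)^m ≤ 5^n := by gcongr; norm_num
            nlinarith
          · have : (5:ℝ)^m ≤ 5^n := by gcongr; norm_num
            nlinarith)
        ⟨0, measure_ne_top _ _⟩
    have hempty : (⋂ n, s n) = ∅ := by
      ext x
      simp only [Set.mem_iInter, Set.mem_empty_iff_false, iff_false, not_forall]
      obtain ⟨n, hn⟩ := pow_unbounded_of_one_lt (|x|/t) (by norm_num : (1:ℝ) < 5)
      refine ⟨n, ?_⟩
      simp only [hs, Set.notMem_compl_iff]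
      have h5 : (1:ℝ) ≤ 5^n := one_le_pow₀ (by norm_num)
      have hxt : |x| < 5^n * t := by
        rw [div_lt_iff₀ ht] at hn; linarith
      have := abs_lt.1 hxt
      constructor <;> nlinarith [this.1, this.2]
    rw [hempty] at htend
    simp only [measure_empty] at htend
    have hle : P (Set.Icc (-t) (1+t))ᶜ ≤ 0 := ge_of_tendsto' htend (fun n => iter t ht.le n)
    exact le_antisymm hle zero_le
  have hunion : (Set.Icc (0:ℝ) 1)ᶜ = ⋃ n : ℕ, (Set.Icc (-(1/(n+1) : ℝ)) (1+1/(n+1)))ᶜ := by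
    ext x
    simp only [Set.mem_compl_iff, Set.mem_Icc, Set.mem_iUnion, not_and_or, not_le]
    constructor
    · rintro (h | h)
      · obtain ⟨n, hn⟩ := exists_nat_one_div_lt (neg_pos.2 h)
        exact ⟨n, Or.inl (by linarith)⟩
      · obtain ⟨n, hn⟩ := exists_nat_one_div_lt (by linarith : (0:ℝ) < x - 1)
        exact ⟨n, Or.inr (by linarith)⟩
    · rintro ⟨n, h | h⟩
      · left; have : (0:ℝ) < 1/(n+1) := by positivity
        linarith
      · right; have : (0:ℝ) < 1/(n+1) := by positivity
        linarith
  rw [hunion]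
  refine measure_iUnion_null fun n => hzero _ (by positivity)

lemma ae_Icc (hP : IsTriadicCantor P) : ∀ᵐ x ∂P, x ∈ Set.Icc (0:ℝ) 1 := by
  rw [ae_iff]
  have h := null_outside P hP
  have : {x : ℝ | ¬ x ∈ Set.Icc (0:ℝ) 1} = (Set.Icc (0:ℝ) 1)ᶜ := rfl
  rw [this, h]

lemma integ_of_bdd (hP : IsTriadicCantor P) {f : ℝ → ℝ} (hm : Measurable f) {C : ℝ}
    (hb : ∀ x ∈ Set.Icc (0:ℝ) 1, |f x| ≤ C) : Integrable f P := by
  refine Integrable.mono' (integrable_const C) hm.aestronglyMeasurable ?_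
  filter_upwards [ae_Icc P hP] with x hx
  simpa [Real.norm_eq_abs] using hb x hx

lemma selfsim (hP : IsTriadicCantor P) {f : ℝ → ℝ} (hm : Measurable f) {C : ℝ}
    (hb : ∀ x ∈ Set.Icc (0:ℝ) 1, |f x| ≤ C) :
    ∫ x, f x ∂P = (1/3) * ((∫ x, f (S 0 x) ∂P) + (∫ x, f (S 1 x) ∂P) + (∫ x, f (S 2 x) ∂P)) := by
  have hint : ∀ j : Fin 3, Integrable (f ∘ S j) P := by
    intro j
    refine integ_of_bdd P hP (hm.comp (measurable_S j)) (C := C) ?_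
    intro x hx
    exact hb _ (S_mem_Icc hx)
  have hmap : ∀ j : Fin 3, Integrable f (P.map (S j)) := fun j =>
    (integrable_map_measure hm.aestronglyMeasurable (measurable_S j).aemeasurable).2 (hint j)
  conv_lhs => rw [hP]
  rw [integral_smul_measure, integral_add_measure ((hmap 0).add_measure (hmap 1)) (hmap 2),
    integral_add_measure (hmap 0) (hmap 1),
    integral_map (measurable_S 0).aemeasurable hm.aestronglyMeasurable,
    integral_map (measurable_S 1).aemeasurable hm.aestronglyMeasurable,
    integral_map (measurable_S 2).aemeasurable hm.aestronglyMeasurable]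
  rw [smul_eq_mul]
  norm_num [ENNReal.toReal_inv]

lemma integ_id (hP : IsTriadicCantor P) : Integrable (fun x : ℝ => x) P :=
  integ_of_bdd P hP measurable_id (C := 1) (by intro x hx; rw [abs_le]; exact ⟨by linarith [hx.1], hx.2⟩)

lemma sq_bdd : ∀ x ∈ Set.Icc (0:ℝ) 1, |x^2| ≤ 1 := by
  intro x hx
  rw [abs_le]; constructor <;> nlinarith [hx.1, hx.2]

lemma integ_sq (hP : IsTriadicCantor P) : Integrable (fun x : ℝ => x^2) P :=
  integ_of_bdd P hP (by fun_prop) sq_bdd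

lemma moment1 (hP : IsTriadicCantor P) : ∫ x, x ∂P = 1/2 := by
  have h := selfsim P hP (f := fun x : ℝ => x) measurable_id (C := 1)
    (by intro x hx; rw [abs_le]; exact ⟨by linarith [hx.1], hx.2⟩)
  simp only [S] at h
  have e : ∀ c : ℝ, ∫ x, (x/5 + c) ∂P = (∫ x, x ∂P)/5 + c := by
    intro c
    rw [integral_add ((integ_id P hP).div_const 5) (integrable_const c),
      integral_div, integral_const]
    simp
  rw [e, e, e] at h
  norm_num at h
  linarith

lemma moment2 (hP : IsTriadicCantor P) : ∫ x, x^2 ∂P = 13/36 := by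
  have h := selfsim P hP (f := fun x : ℝ => x^2) (by fun_prop) (C := 1) sq_bdd
  simp only [S] at h
  have e : ∀ c : ℝ, ∫ x, (x/5 + c)^2 ∂P = (∫ x, x^2 ∂P)/25 + (2*c/5) * (∫ x, x ∂P) + c^2 := by
    intro c
    have : (fun x : ℝ => (x/5 + c)^2) = fun x : ℝ => x^2/25 + ((2*c/5) * x + c^2) := by
      funext x; ring
    have hg : Integrable (fun x : ℝ => 2*c/5 * x + c^2) P :=
      ((integ_id P hP).const_mul _).add (integrable_const _)
    rw [this, integral_add ((integ_sq P hP).div_const 25) hg,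
      integral_add ((integ_id P hP).const_mul _) (integrable_const _),
      integral_div, integral_const_mul, integral_const]
    simp; ring
  rw [e, e, e, moment1 P hP] at h
  norm_num at h
  linarith

lemma quad (hP : IsTriadicCantor P) (a b : ℝ) :
    ∫ x, (a*x + b)^2 ∂P = a^2 * (13/36) + a*b + b^2 := by
  have : (fun x : ℝ => (a*x + b)^2) = fun x : ℝ => a^2 * x^2 + ((2*a*b) * x + b^2) := by
    funext x; ring
  have hg : Integrable (fun x : ℝ => 2*a*b * x + b^2) P :=
    ((integ_id P hP).const_mul _).add (integrable_const _)
  rw [this, integral_add ((integ_sq P hP).const_mul _) hg,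
    integral_add ((integ_id P hP).const_mul _) (integrable_const _),
    integral_const_mul, integral_const_mul, integral_const, moment1 P hP, moment2 P hP]
  simp; ring

end Meas
section InfHelpers

lemma bdd_sq (g : ℝ → ℝ) (s : Set ℝ) (x : ℝ) :
    BddBelow (Set.range fun a : s => (x - g a)^2) := by
  refine ⟨0, ?_⟩; rintro y ⟨a, rfl⟩; positivity

lemma ciInf_le_of_mem {s : Set ℝ} {a : ℝ} (ha : a ∈ s) (x : ℝ) :
    (⨅ b : s, (x - (b:ℝ))^2) ≤ (x - a)^2 := by
  have := ciInf_le (f := fun b : s => (x - (b:ℝ))^2) (by simpa using bdd_sq id s x) ⟨a, ha⟩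
  simpa using this

lemma iInf_sq_nonneg (s : Set ℝ) (hne : s.Nonempty) (x : ℝ) :
    0 ≤ ⨅ a : s, (x - (a:ℝ))^2 := by
  haveI : Nonempty s := hne.to_subtype
  exact le_ciInf fun a => by positivity

lemma exists_iInf_min {s : Set ℝ} (hs : s.Finite) (hne : s.Nonempty) (x : ℝ) :
    ∃ a₀ ∈ s, (⨅ a : s, (x - (a:ℝ))^2) = (x - a₀)^2 ∧ ∀ b ∈ s, (x - a₀)^2 ≤ (x - b)^2 := by
  obtain ⟨a₀, ha₀, hmin⟩ := Set.exists_min_image s (fun a => (x - a)^2) hs hne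
  haveI : Nonempty s := hne.to_subtype
  exact ⟨a₀, ha₀, le_antisymm (ciInf_le_of_mem ha₀ x)
    (le_ciInf fun b => hmin b b.2), hmin⟩

lemma iInf_subset_eq {s u : Set ℝ} (hs : s.Finite) (hu : u ⊆ s) (hune : u.Nonempty) (x : ℝ)
    (h : ∃ b ∈ u, ∀ a ∈ s, a ∉ u → (x - b)^2 ≤ (x - a)^2) :
    (⨅ a : s, (x - (a:ℝ))^2) = ⨅ a : u, (x - (a:ℝ))^2 := by
  obtain ⟨b, hb, hcross⟩ := h
  obtain ⟨a₀, ha₀, heq, hmin⟩ := exists_iInf_min hs (hune.mono hu) x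
  haveI : Nonempty u := hune.to_subtype
  apply le_antisymm
  · exact le_ciInf fun a => ciInf_le_of_mem (hu a.2) x
  · rw [heq]
    by_cases h0 : a₀ ∈ u
    · exact ciInf_le_of_mem h0 x
    · exact (ciInf_le_of_mem hb x).trans (hcross a₀ ha₀ h0)

lemma iInf_image_affine {g : ℝ → ℝ} (s : Set ℝ) (hne : s.Nonempty) (x : ℝ) :
    (⨅ a : (g '' s), (x - (a:ℝ))^2) = ⨅ b : s, (x - g b)^2 := by
  haveI : Nonempty s := hne.to_subtype
  haveI : Nonempty (g '' s) := (hne.image g).to_subtype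
  apply le_antisymm
  · refine le_ciInf fun b => ?_
    have := ciInf_le (f := fun a : (g '' s) => (x - (a:ℝ))^2)
      (by simpa using bdd_sq id (g '' s) x) ⟨g b, ⟨b, b.2, rfl⟩⟩
    simpa using this
  · refine le_ciInf ?_
    rintro ⟨a, b, hb, rfl⟩
    have := ciInf_le (f := fun b : s => (x - g b)^2) (bdd_sq g s x) ⟨b, hb⟩
    simpa using this

lemma iInf_smul_sq {s : Set ℝ} (hs : s.Finite) (hne : s.Nonempty) (c x : ℝ) (hc : 0 ≤ c) :
    (⨅ a : s, c * (x - (a:ℝ))^2) = c * ⨅ a : s, (x - (a:ℝ))^2 := by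
  obtain ⟨a₀, ha₀, heq, hmin⟩ := exists_iInf_min hs hne x
  haveI : Nonempty s := hne.to_subtype
  rw [heq]
  apply le_antisymm
  · have := ciInf_le (f := fun a : s => c * (x - (a:ℝ))^2)
      (⟨0, by rintro y ⟨a, rfl⟩; positivity⟩) ⟨a₀, ha₀⟩
    simpa using this
  · exact le_ciInf fun a => mul_le_mul_of_nonneg_left (hmin a a.2) hc

lemma iInf_singleton_sq (c x : ℝ) : (⨅ a : ({c} : Set ℝ), (x - (a:ℝ))^2) = (x - c)^2 := by
  haveI : Nonempty ({c} : Set ℝ) := ⟨⟨c, rfl⟩⟩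
  apply le_antisymm (ciInf_le_of_mem (show c ∈ ({c} : Set ℝ) from rfl) x)
  refine le_ciInf ?_
  rintro ⟨a, rfl⟩
  exact le_refl _

lemma iInf_pair_sq (c d x : ℝ) :
    (⨅ a : ({c, d} : Set ℝ), (x - (a:ℝ))^2) = min ((x - c)^2) ((x - d)^2) := by
  haveI : Nonempty ({c, d} : Set ℝ) := ⟨⟨c, Or.inl rfl⟩⟩
  apply le_antisymm
  · exact le_min (ciInf_le_of_mem (show c ∈ ({c, d} : Set ℝ) from Or.inl rfl) x)
      (ciInf_le_of_mem (show d ∈ ({c, d} : Set ℝ) from Or.inr rfl) x)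
  · refine le_ciInf ?_
    rintro ⟨a, rfl | rfl⟩
    · exact min_le_left _ _
    · exact min_le_right _ _

end InfHelpers

section Words

lemma Sword_nil (σ : Fin 0 → Fin 3) : Sword σ = id := by
  simp [Sword]

lemma Sword_cons {ℓ : ℕ} (j : Fin 3) (σ : Fin ℓ → Fin 3) :
    Sword (Fin.cons j σ) = S j ∘ Sword σ := by
  simp [Sword, List.ofFn_succ]

def bset (b : Bool) : Set ℝ := if b then {9/50, 189/250} else {(1/2 : ℝ)}

def vB (b : Bool) : ℝ := if b then 821/28125 else 1/9

def alph (ℓ : ℕ) (t : (Fin ℓ → Fin 3) → Bool) : Set ℝ := ⋃ σ, Sword σ '' bset (t σ)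

def Cs : ℕ → Set ℝ
  | 0 => Set.Icc 0 1
  | (n+1) => ⋃ j : Fin 3, S j '' Cs n

lemma bset_subset (b : Bool) : bset b ⊆ Set.Icc (0:ℝ) 1 := by
  cases b <;> intro x hx <;> simp only [bset, Bool.false_eq_true, if_false, if_true,
    Set.mem_singleton_iff, Set.mem_insert_iff] at hx
  · subst hx; constructor <;> norm_num
  · rcases hx with rfl | rfl <;> constructor <;> norm_num

lemma bset_finite (b : Bool) : (bset b).Finite := by
  cases b <;> simp [bset] <;> exact Set.finite_insert _ (Set.finite_singleton _)

lemma bset_nonempty (b : Bool) : (bset b).Nonempty := by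
  cases b <;> simp [bset]

lemma alph_zero (t : (Fin 0 → Fin 3) → Bool) : alph 0 t = bset (t default) := by
  unfold alph
  have h : ∀ σ : Fin 0 → Fin 3, Sword σ '' bset (t σ) = bset (t default) := by
    intro σ
    rw [Subsingleton.elim σ default, Sword_nil, Set.image_id]
  rw [Set.iUnion_congr h, Set.iUnion_const]

lemma mem_alph {ℓ : ℕ} {t : (Fin ℓ → Fin 3) → Bool} {x : ℝ} :
    x ∈ alph ℓ t ↔ ∃ σ, x ∈ Sword σ '' bset (t σ) := by
  unfold alph; exact Set.mem_iUnion

lemma alph_succ {ℓ : ℕ} (t : (Fin (ℓ+1) → Fin 3) → Bool) :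
    alph (ℓ+1) t = ⋃ j : Fin 3, S j '' alph ℓ (fun τ => t (Fin.cons j τ)) := by
  ext x
  constructor
  · rintro hx
    obtain ⟨σ, hσ⟩ := mem_alph.1 hx
    have hx2 : x ∈ Sword (Fin.cons (σ 0) (Fin.tail σ)) ''
        bset (t (Fin.cons (σ 0) (Fin.tail σ))) := by
      rw [Fin.cons_self_tail]; exact hσ
    rw [Sword_cons, Set.image_comp] at hx2
    refine Set.mem_iUnion.2 ⟨σ 0, ?_⟩
    refine Set.image_mono ?_ hx2
    intro z hz
    exact mem_alph.2 ⟨Fin.tail σ, hz⟩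
  · intro hx
    obtain ⟨j, hj⟩ := Set.mem_iUnion.1 hx
    obtain ⟨y, hy, rfl⟩ := hj
    obtain ⟨τ, hτ⟩ := mem_alph.1 hy
    refine mem_alph.2 ⟨Fin.cons j τ, ?_⟩
    rw [Sword_cons, Set.image_comp]
    exact Set.mem_image_of_mem _ hτ

lemma alph_subset (ℓ : ℕ) (t : (Fin ℓ → Fin 3) → Bool) : alph ℓ t ⊆ Set.Icc (0:ℝ) 1 := by
  induction ℓ with
  | zero => rw [alph_zero]; exact bset_subset _
  | succ ℓ ih =>
    rw [alph_succ]
    rintro x hx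
    obtain ⟨j, hj⟩ := Set.mem_iUnion.1 hx
    obtain ⟨y, hy, rfl⟩ := hj
    exact S_mem_Icc (ih _ hy)

lemma alph_finite (ℓ : ℕ) (t : (Fin ℓ → Fin 3) → Bool) : (alph ℓ t).Finite := by
  induction ℓ with
  | zero => rw [alph_zero]; exact bset_finite _
  | succ ℓ ih =>
    rw [alph_succ]
    exact Set.finite_iUnion fun j => (ih _).image _

lemma alph_nonempty (ℓ : ℕ) (t : (Fin ℓ → Fin 3) → Bool) : (alph ℓ t).Nonempty := by
  induction ℓ with
  | zero => rw [alph_zero]; exact bset_nonempty _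
  | succ ℓ ih =>
    rw [alph_succ]
    obtain ⟨y, hy⟩ := ih (fun τ => t (Fin.cons 0 τ))
    exact ⟨S 0 y, Set.mem_iUnion.2 ⟨0, Set.mem_image_of_mem _ hy⟩⟩

lemma Cs_subset (n : ℕ) : Cs n ⊆ Set.Icc (0:ℝ) 1 := by
  induction n with
  | zero => exact subset_rfl
  | succ n ih =>
    rintro x hx
    obtain ⟨j, hj⟩ := Set.mem_iUnion.1 hx
    obtain ⟨y, hy, rfl⟩ := hj
    exact S_mem_Icc (ih hy)

lemma S_image (j : Fin 3) (A : Set ℝ) :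
    S j '' A = (fun y => 5*y - 2*(j:ℝ)) ⁻¹' A := by
  ext y
  simp only [Set.mem_image, Set.mem_preimage, S]
  constructor
  · rintro ⟨x, hx, rfl⟩
    convert hx using 1; ring
  · intro h
    exact ⟨5*y - 2*(j:ℝ), h, by ring⟩

lemma Cs_measurable (n : ℕ) : MeasurableSet (Cs n) := by
  induction n with
  | zero => exact measurableSet_Icc
  | succ n ih =>
    refine MeasurableSet.iUnion fun j => ?_
    rw [S_image]
    exact ih.preimage (by fun_prop)

lemma near (ℓ : ℕ) (t : (Fin ℓ → Fin 3) → Bool) :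
    ∀ x ∈ Cs ℓ, ∃ b ∈ alph ℓ t, (x - b)^2 ≤ 1/4 := by
  induction ℓ with
  | zero =>
    intro x hx
    obtain ⟨h0, h1⟩ := hx
    rw [alph_zero]
    cases hb : t default with
    | false =>
      refine ⟨1/2, by simp [bset], by nlinarith⟩
    | true =>
      by_cases hc : x ≤ 117/250
      · exact ⟨9/50, by simp [bset], by nlinarith⟩
      · refine ⟨189/250, by simp [bset], by nlinarith⟩
  | succ ℓ ih =>
    intro x hx
    obtain ⟨j, hj⟩ := Set.mem_iUnion.1 hx
    obtain ⟨y, hy, rfl⟩ := hj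
    obtain ⟨b', hb', hle⟩ := ih (fun τ => t (Fin.cons j τ)) y hy
    refine ⟨S j b', ?_, ?_⟩
    · rw [alph_succ]
      exact Set.mem_iUnion.2 ⟨j, Set.mem_image_of_mem _ hb'⟩
    · simp only [S]
      nlinarith

lemma cross_sep {j k : Fin 3} (hjk : j ≠ k) {x a : ℝ}
    (hx : x ∈ Set.Icc (0:ℝ) 1) (ha : a ∈ Set.Icc (0:ℝ) 1) :
    (1/25 : ℝ) ≤ (S j x - S k a)^2 := by
  obtain ⟨hx0, hx1⟩ := hx
  obtain ⟨ha0, ha1⟩ := ha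
  fin_cases j <;> fin_cases k <;>
    first
    | exact absurd rfl hjk
    | (simp only [S]; push_cast; nlinarith)

end Words
section Main
variable (P : Measure ℝ) [IsProbabilityMeasure P]

lemma Cs_null (hP : IsTriadicCantor P) (n : ℕ) : P (Cs n)ᶜ = 0 := by
  induction n with
  | zero => exact null_outside P hP
  | succ n ih =>
    rw [Papply P hP (Cs_measurable (n+1)).compl]
    have hsub : ∀ j : Fin 3, S j ⁻¹' (Cs (n+1))ᶜ ⊆ (Cs n)ᶜ := by
      intro j x hx hxn
      exact hx (Set.mem_iUnion.2 ⟨j, Set.mem_image_of_mem _ hxn⟩)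
    have h0 : ∀ j : Fin 3, P (S j ⁻¹' (Cs (n+1))ᶜ) = 0 :=
      fun j => measure_mono_null (hsub j) ih
    rw [h0 0, h0 1, h0 2]
    simp

lemma ae_Cs (hP : IsTriadicCantor P) (n : ℕ) : ∀ᵐ x ∂P, x ∈ Cs n := by
  rw [ae_iff]
  have : {x : ℝ | ¬ x ∈ Cs n} = (Cs n)ᶜ := rfl
  rw [this, Cs_null P hP n]

/-- distortion of the two-point set -/
lemma V2calc (hP : IsTriadicCantor P) :
    ∫ x, min ((x - 9/50)^2) ((x - 189/250)^2) ∂P = 821/28125 := by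
  set F : ℝ → ℝ := fun x => min ((x - 9/50)^2) ((x - 189/250)^2) with hF
  have hFm : Measurable F := by
    apply Measurable.min <;> fun_prop
  have hFb : ∀ x ∈ Set.Icc (0:ℝ) 1, |F x| ≤ 1 := by
    intro x hx
    rw [abs_le]
    constructor
    · have : (0:ℝ) ≤ F x := le_min (by positivity) (by positivity)
      linarith
    · have : F x ≤ (x - 9/50)^2 := min_le_left _ _
      nlinarith [hx.1, hx.2]
  have h1 := selfsim P hP hFm hFb
  have hGm : Measurable (fun x => F (S 1 x)) := hFm.comp (measurable_S 1)
  have hGb : ∀ x ∈ Set.Icc (0:ℝ) 1, |F (S 1 x)| ≤ 1 := fun x hx => hFb _ (S_mem_Icc hx)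
  have h2 := selfsim P hP hGm hGb
  -- resolve the five minima
  have c0 : ∫ x, F (S 0 x) ∂P = ∫ x, ((1/5)*x + (-(9/50)))^2 ∂P := by
    refine integral_congr_ae ?_
    filter_upwards [ae_Icc P hP] with x hx
    simp only [hF, S0_eq]
    rw [min_eq_left (by nlinarith [hx.1, hx.2])]
    ring
  have c2 : ∫ x, F (S 2 x) ∂P = ∫ x, ((1/5)*x + (11/250))^2 ∂P := by
    refine integral_congr_ae ?_
    filter_upwards [ae_Icc P hP] with x hx
    simp only [hF, S2_eq]
    rw [min_eq_right (by nlinarith [hx.1, hx.2])]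
    ring
  have c10 : ∫ x, F (S 1 (S 0 x)) ∂P = ∫ x, ((1/25)*x + (11/50))^2 ∂P := by
    refine integral_congr_ae ?_
    filter_upwards [ae_Icc P hP] with x hx
    simp only [hF, S0_eq, S1_eq]
    rw [min_eq_left (by nlinarith [hx.1, hx.2])]
    ring
  have c11 : ∫ x, F (S 1 (S 1 x)) ∂P = ∫ x, ((1/25)*x + (-(69/250)))^2 ∂P := by
    refine integral_congr_ae ?_
    filter_upwards [ae_Icc P hP] with x hx
    simp only [hF, S1_eq]
    rw [min_eq_right (by nlinarith [hx.1, hx.2])]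
    ring
  have c12 : ∫ x, F (S 1 (S 2 x)) ∂P = ∫ x, ((1/25)*x + (-(49/250)))^2 ∂P := by
    refine integral_congr_ae ?_
    filter_upwards [ae_Icc P hP] with x hx
    simp only [hF, S2_eq, S1_eq]
    rw [min_eq_right (by nlinarith [hx.1, hx.2])]
    ring
  rw [c10, c11, c12, quad P hP, quad P hP, quad P hP] at h2
  rw [c0, c2, h2, quad P hP, quad P hP] at h1
  rw [h1]
  norm_num

lemma main_formula (hP : IsTriadicCantor P) (ℓ : ℕ) :
    ∀ t : (Fin ℓ → Fin 3) → Bool,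
    distortion P (alph ℓ t) = ((75:ℝ)^ℓ)⁻¹ * ∑ σ : Fin ℓ → Fin 3, vB (t σ) := by
  induction ℓ with
  | zero =>
    intro t
    have hsum : ∑ σ : Fin 0 → Fin 3, vB (t σ) = vB (t default) := by
      have huniv : (Finset.univ : Finset (Fin 0 → Fin 3)) = {default} :=
        Finset.eq_singleton_iff_unique_mem.2 ⟨Finset.mem_univ _, fun x _ => Subsingleton.elim _ _⟩
      rw [huniv, Finset.sum_singleton]
    rw [alph_zero, hsum]
    cases hb : t default with
    | false =>
      have hb2 : bset false = {(1/2 : ℝ)} := by simp [bset]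
      rw [hb2]
      have : distortion P {(1/2:ℝ)} = ∫ x, (1*x + (-(1/2)))^2 ∂P := by
        unfold distortion
        refine integral_congr_ae (Eventually.of_forall fun x => ?_)
        show (⨅ a : ({(1/2:ℝ)} : Set ℝ), (x - (a:ℝ))^2) = (1*x + -(1/2))^2
        rw [iInf_singleton_sq]; ring
      rw [this, quad P hP]
      norm_num [vB]
    | true =>
      have hb2 : bset true = ({9/50, 189/250} : Set ℝ) := by simp [bset]
      rw [hb2]
      have : distortion P ({9/50, 189/250} : Set ℝ)
          = ∫ x, min ((x - 9/50)^2) ((x - 189/250)^2) ∂P := by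
        unfold distortion
        exact integral_congr_ae (Eventually.of_forall fun x => iInf_pair_sq _ _ _)
      rw [this, V2calc P hP]
      norm_num [vB]
  | succ ℓ ih =>
    intro t
    have hAfin := alph_finite (ℓ+1) t
    have hAne := alph_nonempty (ℓ+1) t
    have hA01 := alph_subset (ℓ+1) t
    haveI : Finite (alph (ℓ+1) t) := Set.Finite.to_subtype hAfin
    haveI : Nonempty (alph (ℓ+1) t) := hAne.to_subtype
    set F : ℝ → ℝ := fun x => ⨅ a : (alph (ℓ+1) t), (x - (a:ℝ))^2 with hFdef
    have hFm : Measurable F := Measurable.iInf (fun a => by fun_prop)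
    obtain ⟨b₀, hb₀⟩ := hAne
    have hFb : ∀ x ∈ Set.Icc (0:ℝ) 1, |F x| ≤ 1 := by
      intro x hx
      rw [abs_le]
      constructor
      · have := iInf_sq_nonneg (alph (ℓ+1) t) ⟨b₀, hb₀⟩ x
        linarith
      · refine (ciInf_le_of_mem hb₀ x).trans ?_
        have h1 := hA01 hb₀
        nlinarith [hx.1, hx.2, h1.1, h1.2]
    have h1 := selfsim P hP hFm hFb
    have key : ∀ j : Fin 3, ∫ x, F (S j x) ∂P
        = (1/25) * distortion P (alph ℓ (fun τ => t (Fin.cons j τ))) := by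
      intro j
      unfold distortion
      rw [← integral_const_mul]
      refine integral_congr_ae ?_
      filter_upwards [ae_Cs P hP ℓ] with x hx
      have hx01 : x ∈ Set.Icc (0:ℝ) 1 := Cs_subset ℓ hx
      have hαfin := alph_finite ℓ (fun τ => t (Fin.cons j τ))
      have hαne := alph_nonempty ℓ (fun τ => t (Fin.cons j τ))
      have hsubset : S j '' alph ℓ (fun τ => t (Fin.cons j τ)) ⊆ alph (ℓ+1) t := by
        rw [alph_succ]
        exact Set.subset_iUnion (fun k => S k '' alph ℓ (fun τ => t (Fin.cons k τ))) j
      obtain ⟨b', hb', hnear⟩ := near ℓ (fun τ => t (Fin.cons j τ)) x hx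
      have hstep : F (S j x)
          = ⨅ a : (S j '' alph ℓ (fun τ => t (Fin.cons j τ))), (S j x - (a:ℝ))^2 := by
        rw [hFdef]
        refine iInf_subset_eq hAfin hsubset (hαne.image _) (S j x) ?_
        refine ⟨S j b', Set.mem_image_of_mem _ hb', ?_⟩
        intro a ha hnot
        have hk : ∃ k : Fin 3, k ≠ j ∧ a ∈ S k '' alph ℓ (fun τ => t (Fin.cons k τ)) := by
          rw [alph_succ] at ha
          obtain ⟨k, hk⟩ := Set.mem_iUnion.1 ha
          refine ⟨k, fun h => hnot ?_, hk⟩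
          rwa [h] at hk
        obtain ⟨k, hkj, c, hc, rfl⟩ := hk
        have hlhs : (S j x - S j b')^2 = (1/25)*(x - b')^2 := by
          simp only [S]; ring
        have h2 : (1/25:ℝ) ≤ (S j x - S k c)^2 :=
          cross_sep hkj.symm hx01 (alph_subset ℓ _ hc)
        rw [hlhs]
        nlinarith [hnear]
      rw [hstep, iInf_image_affine (g := S j) (alph ℓ (fun τ => t (Fin.cons j τ))) hαne (S j x)]
      have hc : ∀ b : (alph ℓ (fun τ => t (Fin.cons j τ))),
          (S j x - S j (b:ℝ))^2 = (1/25) * (x - (b:ℝ))^2 := fun b => by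
        simp only [S]; ring
      rw [iInf_congr hc, iInf_smul_sq hαfin hαne _ x (by norm_num)]
    rw [key 0, key 1, key 2, ih _, ih _, ih _] at h1
    have hd : distortion P (alph (ℓ+1) t) = ∫ x, F x ∂P := rfl
    rw [hd, h1]
    have hsum : ∑ σ : Fin (ℓ+1) → Fin 3, vB (t σ)
        = ∑ j : Fin 3, ∑ τ : Fin ℓ → Fin 3, vB (t (Fin.cons j τ)) := by
      have h2 : ∑ p : Fin 3 × (Fin ℓ → Fin 3), vB (t (Fin.cons p.1 p.2))
          = ∑ σ : Fin (ℓ+1) → Fin 3, vB (t σ) :=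
        Fintype.sum_equiv (Fin.consEquiv (fun _ => Fin 3)) _ _
          (fun p => rfl)
      rw [← h2, Fintype.sum_prod_type]
    rw [hsum, Fin.sum_univ_three]
    rw [pow_succ, mul_inv]
    ring

end Main

theorem stmt10 (P : Measure ℝ) [IsProbabilityMeasure P] (hP : IsTriadicCantor P)
    (ℓ n : ℕ) (hℓ : 1 ≤ ℓ) (h1 : 3 ^ ℓ ≤ n) (h2 : n ≤ 2 * 3 ^ ℓ)
    (I : Finset (Fin ℓ → Fin 3)) (hI : I.card = n - 3 ^ ℓ) :
    distortion P
        ((fun σ => Sword σ (1 / 2)) '' {σ | σ ∉ I} ∪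
          ⋃ σ ∈ I, Sword σ '' ({9 / 50, 189 / 250} : Set ℝ))
      = ((75 : ℝ) ^ ℓ)⁻¹ *
          (((2 * 3 ^ ℓ : ℝ) - n) * (1 / 9) + ((n : ℝ) - 3 ^ ℓ) * (821 / 28125)) := by
  classical
  set t : (Fin ℓ → Fin 3) → Bool := fun σ => decide (σ ∈ I) with ht
  have hset : ((fun σ => Sword σ (1 / 2)) '' {σ | σ ∉ I} ∪
      ⋃ σ ∈ I, Sword σ '' ({9 / 50, 189 / 250} : Set ℝ)) = alph ℓ t := by
    ext x
    constructor
    · intro hx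
      rcases hx with ⟨σ, hσ, rfl⟩ | hx
      · refine mem_alph.2 ⟨σ, ?_⟩
        have hσ' : σ ∉ I := hσ
        have : bset (t σ) = {(1/2 : ℝ)} := by simp [bset, ht, hσ']
        rw [this]
        exact ⟨1/2, rfl, rfl⟩
      · obtain ⟨σ, hσ, hxσ⟩ := Set.mem_iUnion₂.1 hx
        refine mem_alph.2 ⟨σ, ?_⟩
        have : bset (t σ) = ({9/50, 189/250} : Set ℝ) := by simp [bset, ht, hσ]
        rw [this]
        exact hxσ
    · intro hx
      obtain ⟨σ, hxσ⟩ := mem_alph.1 hx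
      by_cases hσ : σ ∈ I
      · right
        refine Set.mem_iUnion₂.2 ⟨σ, hσ, ?_⟩
        have : bset (t σ) = ({9/50, 189/250} : Set ℝ) := by simp [bset, ht, hσ]
        rwa [this] at hxσ
      · left
        have : bset (t σ) = {(1/2 : ℝ)} := by simp [bset, ht, hσ]
        rw [this] at hxσ
        obtain ⟨y, hy, rfl⟩ := hxσ
        rcases hy with rfl
        exact ⟨σ, hσ, rfl⟩
  rw [hset, main_formula P hP ℓ t]
  have hsum : ∑ σ : Fin ℓ → Fin 3, vB (t σ)
      = (I.card : ℝ) * (821/28125) + (Iᶜ.card : ℝ) * (1/9) := by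
    rw [← Finset.sum_add_sum_compl I]
    have e1 : ∑ σ ∈ I, vB (t σ) = ∑ _σ ∈ I, (821/28125 : ℝ) :=
      Finset.sum_congr rfl fun σ hσ => by simp [vB, ht, hσ]
    have e2 : ∑ σ ∈ Iᶜ, vB (t σ) = ∑ _σ ∈ Iᶜ, (1/9 : ℝ) :=
      Finset.sum_congr rfl fun σ hσ => by
        have : σ ∉ I := Finset.mem_compl.1 hσ
        simp [vB, ht, this]
    rw [e1, e2, Finset.sum_const, Finset.sum_const, nsmul_eq_mul, nsmul_eq_mul]
  have hcard : Fintype.card (Fin ℓ → Fin 3) = 3^ℓ := by simp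
  have h2' : n - 3^ℓ ≤ 3^ℓ := by omega
  have hcompl : Iᶜ.card = 3^ℓ - (n - 3^ℓ) := by
    rw [Finset.card_compl, hI, hcard]
  have hc1 : ((I.card : ℕ) : ℝ) = (n : ℝ) - 3^ℓ := by
    rw [hI, Nat.cast_sub h1]; push_cast; ring
  have hc2 : ((Iᶜ.card : ℕ) : ℝ) = 2*(3:ℝ)^ℓ - n := by
    rw [hcompl, Nat.cast_sub h2', Nat.cast_sub h1]; push_cast; ring
  rw [hsum, hc1, hc2]
  ring
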